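/- Let D be a positive definite diagonal m×m matrix, L an m×m matrix, and T a linear subspace of ℝ^m. If uᵀ(DL+LᵀD)u < 0 for all nonzero u ∈ T, then the quantity μ = min_{u∈T, u≠0} (−uᵀ(DL)^s u)/(uᵀDu) is strictly positive, and for all α > 0 and all c > α/μ, one has uᵀ[D(cL+αI_m)]^s u < 0 for every nonzero u ∈ T. -/
import Mathlib

open Matrix

private lemma quad_continuous (m : ℕ) (M : Matrix (Fin m) (Fin m) ℝ) :
    Continuous fun u : Fin m → ℝ => u ⬝ᵥ M.mulVec u := by
  simp only [dotProduct, mulVec, dotProduct]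
  fun_prop

private lemma quad_smul (m : ℕ) (M : Matrix (Fin m) (Fin m) ℝ) (t : ℝ) (u : Fin m → ℝ) :
    (t • u) ⬝ᵥ M.mulVec (t • u) = t ^ 2 * (u ⬝ᵥ M.mulVec u) := by
  rw [Matrix.mulVec_smul, smul_dotProduct, dotProduct_smul, smul_eq_mul, smul_eq_mul]
  ring

private lemma diag_quad_pos (m : ℕ) (d : Fin m → ℝ) (hd : ∀ i, 0 < d i)
    (u : Fin m → ℝ) (hu : u ≠ 0) :
    0 < u ⬝ᵥ (Matrix.diagonal d).mulVec u := by
  unfold dotProduct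
  obtain ⟨i, hi⟩ := Function.ne_iff.mp hu
  simp only [Pi.zero_apply] at hi
  apply Finset.sum_pos' _ ⟨i, Finset.mem_univ i, ?_⟩
  · intro j _
    rw [Matrix.mulVec_diagonal]
    nlinarith [hd j, sq_nonneg (u j)]
  · rw [Matrix.mulVec_diagonal]
    nlinarith [hd i, mul_self_pos.mpr hi]

private lemma quad_add_smul (m : ℕ) (B C : Matrix (Fin m) (Fin m) ℝ) (a b : ℝ)
    (u : Fin m → ℝ) :
    u ⬝ᵥ (a • B + b • C).mulVec u = a * (u ⬝ᵥ B.mulVec u) + b * (u ⬝ᵥ C.mulVec u) := by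
  rw [Matrix.add_mulVec, Matrix.smul_mulVec, Matrix.smul_mulVec,
    dotProduct_add, dotProduct_smul, dotProduct_smul, smul_eq_mul, smul_eq_mul]

theorem cluster_synchronizability_threshold
    (m : ℕ) (d : Fin m → ℝ) (hd : ∀ i, 0 < d i)
    (L : Matrix (Fin m) (Fin m) ℝ)
    (T : Submodule ℝ (Fin m → ℝ)) (hT : T ≠ ⊥)
    (hneg : ∀ u ∈ T, u ≠ 0 →
      u ⬝ᵥ ((Matrix.diagonal d * L + Lᵀ * Matrix.diagonal d).mulVec u) < 0) :
    letI μ : ℝ := sInf {r : ℝ | ∃ u ∈ T, u ≠ 0 ∧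
      r = -(u ⬝ᵥ ((((1:ℝ)/2) • (Matrix.diagonal d * L + (Matrix.diagonal d * L)ᵀ)).mulVec u)) /
          (u ⬝ᵥ ((Matrix.diagonal d).mulVec u))}
    0 < μ ∧
    ∀ α : ℝ, 0 < α → ∀ cc : ℝ, α / μ < cc →
      ∀ u ∈ T, u ≠ 0 →
        u ⬝ᵥ ((((1:ℝ)/2) •
          (Matrix.diagonal d * (cc • L + α • (1 : Matrix (Fin m) (Fin m) ℝ)) +
           (Matrix.diagonal d * (cc • L + α • (1 : Matrix (Fin m) (Fin m) ℝ)))ᵀ)).mulVec u) < 0 := by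
  set Dm := Matrix.diagonal d with hDm
  set A : Matrix (Fin m) (Fin m) ℝ := ((1:ℝ)/2) • (Dm * L + (Dm * L)ᵀ) with hA
  set g : (Fin m → ℝ) → ℝ :=
    fun u => -(u ⬝ᵥ A.mulVec u) / (u ⬝ᵥ Dm.mulVec u) with hg
  set S : Set ℝ := {r : ℝ | ∃ u ∈ T, u ≠ 0 ∧
      r = -(u ⬝ᵥ (A.mulVec u)) / (u ⬝ᵥ (Dm.mulVec u))} with hS
  -- numerator negativity
  have hnum : ∀ u ∈ T, u ≠ 0 → u ⬝ᵥ A.mulVec u < 0 := by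
    intro u hu hune
    have : u ⬝ᵥ A.mulVec u = (1/2 : ℝ) * (u ⬝ᵥ ((Dm * L + Lᵀ * Dm).mulVec u)) := by
      rw [hA, Matrix.transpose_mul, Matrix.diagonal_transpose, Matrix.smul_mulVec,
        dotProduct_smul, smul_eq_mul, hDm]
    rw [this]
    have := hneg u hu hune
    linarith
  have hden : ∀ u : Fin m → ℝ, u ≠ 0 → 0 < u ⬝ᵥ Dm.mulVec u :=
    fun u hu => diag_quad_pos m d hd u hu
  have hgpos : ∀ u ∈ T, u ≠ 0 → 0 < g u := by
    intro u hu hune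
    exact div_pos (by linarith [hnum u hu hune]) (hden u hune)
  -- scale invariance of g
  have hgscale : ∀ (t : ℝ), t ≠ 0 → ∀ u : Fin m → ℝ, u ≠ 0 → g (t • u) = g u := by
    intro t ht u hu
    have ht2 : (t : ℝ) ^ 2 ≠ 0 := by positivity
    simp only [hg]
    rw [quad_smul m A t u, quad_smul m Dm t u, ← mul_neg, mul_div_mul_left _ _ ht2]
  -- the compact set
  set K : Set (Fin m → ℝ) := (T : Set (Fin m → ℝ)) ∩ Metric.sphere 0 1 with hK
  have hKcomp : IsCompact K :=
    (isCompact_sphere (0 : Fin m → ℝ) 1).inter_left T.closed_of_finiteDimensional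
  obtain ⟨v, hvT, hvne⟩ := Submodule.exists_mem_ne_zero_of_ne_bot hT
  have hvnorm : ‖v‖ ≠ 0 := norm_ne_zero_iff.mpr hvne
  have hKne : K.Nonempty := by
    refine ⟨‖v‖⁻¹ • v, T.smul_mem _ hvT, ?_⟩
    rw [mem_sphere_zero_iff_norm, norm_smul, norm_inv, norm_norm, inv_mul_cancel₀ hvnorm]
  have hKne0 : ∀ u ∈ K, u ≠ 0 := by
    intro u hu
    have : ‖u‖ = 1 := mem_sphere_zero_iff_norm.mp hu.2
    intro h; rw [h, norm_zero] at this; norm_num at this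
  have hgcont : ContinuousOn g K := by
    apply ContinuousOn.div
    · exact ((quad_continuous m A).neg).continuousOn
    · exact (quad_continuous m Dm).continuousOn
    · exact fun u hu => ne_of_gt (hden u (hKne0 u hu))
  obtain ⟨u₀, hu₀K, hmin⟩ := hKcomp.exists_isMinOn hKne hgcont
  have hμ₀pos : 0 < g u₀ := hgpos u₀ hu₀K.1 (hKne0 u₀ hu₀K)
  -- g u₀ is a lower bound of S
  have hglb : ∀ r ∈ S, g u₀ ≤ r := by
    rintro r ⟨u, huT, hune, rfl⟩
    have hunorm : ‖u‖ ≠ 0 := norm_ne_zero_iff.mpr hune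
    have hmem : ‖u‖⁻¹ • u ∈ K := by
      refine ⟨T.smul_mem _ huT, ?_⟩
      rw [mem_sphere_zero_iff_norm, norm_smul, norm_inv, norm_norm, inv_mul_cancel₀ hunorm]
    have h := hmin hmem
    simp only [Set.mem_setOf_eq] at h
    rwa [hgscale _ (inv_ne_zero hunorm) u hune] at h
  have hSne : S.Nonempty := ⟨g v, v, hvT, hvne, rfl⟩
  have hbdd : BddBelow S := ⟨g u₀, hglb⟩
  have hμpos : 0 < sInf S := lt_of_lt_of_le hμ₀pos (le_csInf hSne hglb)
  refine ⟨hμpos, ?_⟩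
  intro α hα cc hcc u huT hune
  -- matrix identity
  have hmat : ((1:ℝ)/2) •
      (Dm * (cc • L + α • (1 : Matrix (Fin m) (Fin m) ℝ)) +
       (Dm * (cc • L + α • (1 : Matrix (Fin m) (Fin m) ℝ)))ᵀ) = cc • A + α • Dm := by
    have h1 : Dm * (cc • L + α • (1 : Matrix (Fin m) (Fin m) ℝ)) = cc • (Dm * L) + α • Dm := by
      rw [Matrix.mul_add, Matrix.mul_smul, Matrix.mul_smul, Matrix.mul_one]
    rw [h1, Matrix.transpose_add, Matrix.transpose_smul, Matrix.transpose_smul,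
      Matrix.diagonal_transpose, ← hDm, hA]
    ext i j
    simp only [Matrix.add_apply, Matrix.smul_apply, smul_eq_mul, Matrix.transpose_apply]
    ring
  rw [hmat, quad_add_smul m A Dm cc α u]
  set X := u ⬝ᵥ A.mulVec u
  set Y := u ⬝ᵥ Dm.mulVec u
  have hY : 0 < Y := hden u hune
  have hle : sInf S ≤ -X / Y := csInf_le hbdd ⟨u, huT, hune, rfl⟩
  have h1 : sInf S * Y ≤ -X := by
    rw [← le_div_iff₀ hY]; exact hle
  have h2 : α < cc * sInf S := by
    rw [div_lt_iff₀ hμpos] at hcc; linarith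
  have hccpos : 0 < cc := lt_trans (div_pos hα hμpos) hcc
  nlinarith [mul_le_mul_of_nonneg_left h1 hccpos.le, mul_lt_mul_of_pos_right h2 hY]
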